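/- arXiv:2209.01697 — 3 statements merged into one kernel-verified Lean document; each statement's English description precedes it below -/
import Mathlib

section
/- Let p ≥ 1, let Σ and Σ̂ be real symmetric positive definite p×p matrices with inverses Θ = Σ⁻¹ and Θ̂ = Σ̂⁻¹, and let ι ∈ ℝ^p be the all-ones vector. Set a = ιᵀΘι/p, â = ιᵀΘ̂ι/p, w = Θι/(ιᵀΘι), and ŵ = Θ̂ι/(ιᵀΘ̂ι). Then the ℓ₁-distance between the weight vectors satisfies ‖ŵ − w‖₁ ≤ ( a·‖(Θ̂ − Θ)ι‖₁/p + |a − â|·‖Θι‖₁/p ) / ( |â|·a ). -/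
open Matrix

/-- ℓ₁-bound on the error of estimated forecast combination weights:
`‖ŵ − w‖₁ ≤ (a·‖(Θ̂ − Θ)ι‖₁/p + |a − â|·‖Θι‖₁/p) / (|â|·a)`. -/
theorem stmt_2 (p : ℕ) (hp : 1 ≤ p)
    (Sig SigHat : Matrix (Fin p) (Fin p) ℝ) (hSig : Sig.PosDef) (hSigHat : SigHat.PosDef)
    (Θ ΘHat : Matrix (Fin p) (Fin p) ℝ) (hΘ : Θ = Sig⁻¹) (hΘHat : ΘHat = SigHat⁻¹)
    (ι : Fin p → ℝ) (hι : ι = fun _ => (1 : ℝ))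
    (a aHat : ℝ) (ha : a = ι ⬝ᵥ Θ.mulVec ι / p) (haHat : aHat = ι ⬝ᵥ ΘHat.mulVec ι / p)
    (w wHat : Fin p → ℝ)
    (hw : w = (ι ⬝ᵥ Θ.mulVec ι)⁻¹ • Θ.mulVec ι)
    (hwHat : wHat = (ι ⬝ᵥ ΘHat.mulVec ι)⁻¹ • ΘHat.mulVec ι) :
    ∑ i, |wHat i - w i| ≤
      (a * ((∑ i, |((ΘHat - Θ).mulVec ι) i|) / p) +
        |a - aHat| * ((∑ i, |(Θ.mulVec ι) i|) / p)) / (|aHat| * a) := by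
  have hι0 : ι ≠ 0 := by
    rw [hι]; intro h
    have : (1:ℝ) = 0 := congrFun h ⟨0, hp⟩
    norm_num at this
  set u : Fin p → ℝ := Θ.mulVec ι with hu
  set v : Fin p → ℝ := ΘHat.mulVec ι with hv
  set s : ℝ := ι ⬝ᵥ u with hs
  set t : ℝ := ι ⬝ᵥ v with ht
  have hsp : 0 < s := by
    have := (hΘ ▸ hSig.inv).dotProduct_mulVec_pos hι0
    simpa using this
  have htp : 0 < t := by
    have := (hΘHat ▸ hSigHat.inv).dotProduct_mulVec_pos hι0
    simpa using this
  have hpr : (0:ℝ) < p := by exact_mod_cast hp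
  have hsum : ∀ i, |((ΘHat - Θ).mulVec ι) i| = |v i - u i| := by
    intro i; rw [Matrix.sub_mulVec]; rfl
  -- pointwise bound
  have hpt : ∀ i, |wHat i - w i| ≤ t⁻¹ * |v i - u i| + |s - t| / (t * s) * |u i| := by
    intro i
    have heq : wHat i - w i = t⁻¹ * (v i - u i) + (s - t) / (t * s) * u i := by
      rw [hw, hwHat]
      simp only [Pi.smul_apply, smul_eq_mul, ← hu, ← hv, ← hs, ← ht]
      field_simp
      ring
    rw [heq]
    calc |t⁻¹ * (v i - u i) + (s - t) / (t * s) * u i|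
        ≤ |t⁻¹ * (v i - u i)| + |(s - t) / (t * s) * u i| := abs_add_le _ _
      _ = t⁻¹ * |v i - u i| + |s - t| / (t * s) * |u i| := by
          rw [abs_mul, abs_mul, abs_of_pos (inv_pos.mpr htp), abs_div,
            abs_of_pos (mul_pos htp hsp)]
  have hLHS : ∑ i, |wHat i - w i| ≤ t⁻¹ * (∑ i, |v i - u i|) + |s - t| / (t * s) * (∑ i, |u i|) := by
    rw [Finset.mul_sum, Finset.mul_sum, ← Finset.sum_add_distrib]
    exact Finset.sum_le_sum fun i _ => hpt i
  have hRHS : (a * ((∑ i, |((ΘHat - Θ).mulVec ι) i|) / p) +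
        |a - aHat| * ((∑ i, |(Θ.mulVec ι) i|) / p)) / (|aHat| * a)
      = t⁻¹ * (∑ i, |v i - u i|) + |s - t| / (t * s) * (∑ i, |u i|) := by
    have h1 : ∑ i, |((ΘHat - Θ).mulVec ι) i| = ∑ i, |v i - u i| :=
      Finset.sum_congr rfl fun i _ => hsum i
    have h2 : |aHat| = t / p := by
      rw [haHat, abs_of_pos (div_pos htp hpr)]
    have h3 : |a - aHat| = |s - t| / p := by
      rw [ha, haHat, div_sub_div_same, abs_div, abs_of_pos hpr]
    rw [h1, h2, h3, ha, ← hu]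
    field_simp
  rw [hRHS]
  exact hLHS
end

section
/- Let S and A be real symmetric p×p matrices and η > 0. Suppose (1/η)A − S = QΛQᵀ where Q is a p×p orthogonal matrix and Λ = diag(λ₁, …, λ_p). Define Θ = Q·D·Qᵀ where D = diag(v₁, …, v_p) with v_j = η(λ_j + √(λ_j² + 4/η))/2 for each j. Then Θ is symmetric positive definite, it is invertible, and it satisfies the first-order optimality condition S − Θ⁻¹ + (1/η)(Θ − A) = 0. -/
open Matrix

lemma aux_vpos {l η : ℝ} (hη : 0 < η) :
    0 < η * (l + Real.sqrt (l ^ 2 + 4 / η)) / 2 := by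
  have hc : 0 < 4 / η := by positivity
  have hs0 : 0 ≤ Real.sqrt (l ^ 2 + 4 / η) := Real.sqrt_nonneg _
  have hs2 : Real.sqrt (l ^ 2 + 4 / η) ^ 2 = l ^ 2 + 4 / η :=
    Real.sq_sqrt (by positivity)
  have h : 0 < l + Real.sqrt (l ^ 2 + 4 / η) := by
    nlinarith [hs2, hs0, hc, sq_nonneg (l + Real.sqrt (l ^ 2 + 4 / η))]
  positivity

lemma aux_veq {l η : ℝ} (hη : 0 < η) :
    (1 / η) * (η * (l + Real.sqrt (l ^ 2 + 4 / η)) / 2)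
      - (η * (l + Real.sqrt (l ^ 2 + 4 / η)) / 2)⁻¹ = l := by
  set s := Real.sqrt (l ^ 2 + 4 / η) with hsdef
  set w := η * (l + s) / 2 with hw
  have hwpos : 0 < w := aux_vpos hη
  have hs2 : s ^ 2 = l ^ 2 + 4 / η := Real.sq_sqrt (by positivity)
  have hηne : η ≠ 0 := ne_of_gt hη
  have hkey : w ^ 2 = η * (l * w + 1) := by
    have hs2' : η ^ 2 * s ^ 2 = η ^ 2 * l ^ 2 + 4 * η := by
      rw [hs2]; field_simp
    rw [hw]
    nlinarith [hs2']
  have hηne : η ≠ 0 := ne_of_gt hη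
  have hwne : w ≠ 0 := ne_of_gt hwpos
  field_simp
  nlinarith [hkey]

/-- The closed-form ADMM Θ-update: given symmetric `S`, `A`, `η > 0`, and an
eigendecomposition `(1/η)A − S = QΛQᵀ` with `Q` orthogonal, the matrix
`Θ = Q·diag(v)·Qᵀ` with `v_j = η(λ_j + √(λ_j² + 4/η))/2` is symmetric positive
definite, invertible, and satisfies `S − Θ⁻¹ + (1/η)(Θ − A) = 0`. -/
theorem stmt_8 (p : ℕ) (S A : Matrix (Fin p) (Fin p) ℝ)
    (hS : S.IsSymm) (hA : A.IsSymm) (η : ℝ) (hη : 0 < η)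
    (Q : Matrix (Fin p) (Fin p) ℝ) (hQ : Qᵀ * Q = 1) (hQ' : Q * Qᵀ = 1)
    (lam : Fin p → ℝ)
    (hdecomp : (1 / η) • A - S = Q * Matrix.diagonal lam * Qᵀ)
    (v : Fin p → ℝ) (hv : v = fun j => η * (lam j + Real.sqrt (lam j ^ 2 + 4 / η)) / 2)
    (Θ : Matrix (Fin p) (Fin p) ℝ) (hΘ : Θ = Q * Matrix.diagonal v * Qᵀ) :
    Θ.PosDef ∧ IsUnit Θ.det ∧ S - Θ⁻¹ + (1 / η) • (Θ - A) = 0 := by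
  have hvpos : ∀ j, 0 < v j := by
    intro j; rw [hv]; exact aux_vpos hη
  have hvne : ∀ j, v j ≠ 0 := fun j => ne_of_gt (hvpos j)
  -- positive definiteness
  have hPD : Θ.PosDef := by
    rw [Matrix.posDef_iff_dotProduct_mulVec]
    constructor
    · rw [hΘ]
      unfold Matrix.IsHermitian
      rw [conjTranspose_mul, conjTranspose_mul]
      simp [Matrix.mul_assoc, Matrix.diagonal_conjTranspose]
    · intro x hx
      have hy : Qᵀ *ᵥ x ≠ 0 := by
        intro h
        apply hx
        have : Q *ᵥ (Qᵀ *ᵥ x) = Q *ᵥ 0 := by rw [h]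
        rwa [Matrix.mulVec_mulVec, hQ', Matrix.one_mulVec, Matrix.mulVec_zero] at this
      rw [hΘ]
      have hexp : star x ⬝ᵥ (Q * Matrix.diagonal v * Qᵀ) *ᵥ x
          = (Qᵀ *ᵥ x) ⬝ᵥ (Matrix.diagonal v *ᵥ (Qᵀ *ᵥ x)) := by
        rw [← Matrix.mulVec_mulVec, ← Matrix.mulVec_mulVec]
        rw [Matrix.dotProduct_mulVec (star x) Q, star_trivial]
        rw [← Matrix.mulVec_transpose]
      rw [hexp]
      obtain ⟨i, hi⟩ := Function.ne_iff.mp hy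
      rw [dotProduct]
      apply Finset.sum_pos'
      · intro j _
        rw [Matrix.mulVec_diagonal]
        have := (hvpos j).le
        nlinarith [sq_nonneg ((Qᵀ *ᵥ x) j)]
      · refine ⟨i, Finset.mem_univ i, ?_⟩
        rw [Matrix.mulVec_diagonal]
        have hne : (Qᵀ *ᵥ x) i ≠ 0 := hi
        nlinarith [hvpos i, mul_self_pos.mpr hne]
  refine ⟨hPD, hPD.isUnit.map (Matrix.detMonoidHom), ?_⟩
  -- inverse
  have hinv : Θ⁻¹ = Q * Matrix.diagonal (fun j => (v j)⁻¹) * Qᵀ := by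
    apply Matrix.inv_eq_right_inv
    rw [hΘ]
    calc Q * Matrix.diagonal v * Qᵀ * (Q * Matrix.diagonal (fun j => (v j)⁻¹) * Qᵀ)
        = Q * Matrix.diagonal v * (Qᵀ * Q) * Matrix.diagonal (fun j => (v j)⁻¹) * Qᵀ := by
          noncomm_ring
      _ = Q * (Matrix.diagonal v * Matrix.diagonal (fun j => (v j)⁻¹)) * Qᵀ := by
          rw [hQ]; noncomm_ring
      _ = 1 := by
          rw [Matrix.diagonal_mul_diagonal]
          have : (fun j => v j * (v j)⁻¹) = fun _ => (1 : ℝ) := by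
            funext j; exact mul_inv_cancel₀ (hvne j)
          rw [this, Matrix.diagonal_one, Matrix.mul_one, hQ']
  -- the optimality equation
  have hS' : S = (1 / η) • A - Q * Matrix.diagonal lam * Qᵀ := by
    rw [← hdecomp]; ring_nf
    abel
  have hfun : ∀ j, (1 / η) * v j - (v j)⁻¹ - lam j = 0 := by
    intro j
    have := aux_veq (l := lam j) hη
    rw [hv]
    simp only []
    linarith [this]
  have hdiag : (1 / η) • Matrix.diagonal v - Matrix.diagonal (fun j => (v j)⁻¹)
      - Matrix.diagonal lam = 0 := by
    ext i j
    by_cases h : i = j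
    · subst h
      simp only [Matrix.sub_apply, Matrix.smul_apply, Matrix.diagonal_apply_eq,
        smul_eq_mul, Matrix.zero_apply]
      linarith [hfun i]
    · simp [Matrix.diagonal_apply_ne _ h]
  rw [hS', hinv, hΘ, smul_sub]
  have hsmul : (1 / η) • (Q * Matrix.diagonal v * Qᵀ)
      = Q * ((1 / η) • Matrix.diagonal v) * Qᵀ := by
    rw [Matrix.mul_smul, Matrix.smul_mul]
  rw [hsmul]
  have hcomb : Q * ((1 / η) • Matrix.diagonal v) * Qᵀ
      - Q * Matrix.diagonal (fun j => (v j)⁻¹) * Qᵀ - Q * Matrix.diagonal lam * Qᵀ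
      = Q * ((1 / η) • Matrix.diagonal v - Matrix.diagonal (fun j => (v j)⁻¹)
          - Matrix.diagonal lam) * Qᵀ := by
    simp only [Matrix.mul_sub, Matrix.sub_mul]
  have : ((1 / η) • A - Q * Matrix.diagonal lam * Qᵀ)
      - Q * Matrix.diagonal (fun j => (v j)⁻¹) * Qᵀ
      + (Q * ((1 / η) • Matrix.diagonal v) * Qᵀ - (1 / η) • A)
      = Q * ((1 / η) • Matrix.diagonal v) * Qᵀ
        - Q * Matrix.diagonal (fun j => (v j)⁻¹) * Qᵀ - Q * Matrix.diagonal lam * Qᵀ := by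
    abel
  rw [this, hcomb, hdiag, Matrix.mul_zero, Matrix.zero_mul]
end

section
/- Let S and A be real symmetric p×p matrices and η > 0, and let (1/η)A − S = QΛQᵀ with Q orthogonal and Λ = diag(λ₁, …, λ_p). Define Θ* = Q·diag(v₁, …, v_p)·Qᵀ with v_j = η(λ_j + √(λ_j² + 4/η))/2. Then Θ* minimizes the function f(Θ) = trace(SΘ) − log det Θ + (1/(2η))‖Θ − A‖_F² over all real symmetric positive definite p×p matrices Θ; that is, f(Θ*) ≤ f(Θ) for every symmetric positive definite Θ. -/
open Matrix

lemma aux_tr_symm {n : Type*} [Fintype n] (X Y : Matrix n n ℝ) (hY : Yᵀ = Y) :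
    Matrix.trace (X * Y) = ∑ i, ∑ j, X i j * Y i j := by
  simp only [Matrix.trace, Matrix.diag, Matrix.mul_apply]
  refine Finset.sum_congr rfl fun i _ => Finset.sum_congr rfl fun j _ => ?_
  conv_lhs => rw [← hY]
  rfl

lemma aux_posdef_conj {n : Type*} [Fintype n] [DecidableEq n]
    {D : Matrix n n ℝ} (hD : D.PosDef) {Q : Matrix n n ℝ} (hQ' : Q * Qᵀ = 1) :
    (Q * D * Qᵀ).PosDef := by
  refine Matrix.posDef_iff_dotProduct_mulVec.mpr ⟨?_, ?_⟩
  · have h := Matrix.isHermitian_mul_mul_conjTranspose Q hD.1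
    simpa using h
  · intro x hx
    have hy : Qᵀ *ᵥ x ≠ 0 := by
      intro h
      apply hx
      have : (Q * Qᵀ) *ᵥ x = Q *ᵥ (Qᵀ *ᵥ x) := by rw [Matrix.mulVec_mulVec]
      rw [hQ', h, Matrix.mulVec_zero, Matrix.one_mulVec] at this
      exact this
    have key : star x ⬝ᵥ (Q * D * Qᵀ) *ᵥ x = star (Qᵀ *ᵥ x) ⬝ᵥ D *ᵥ (Qᵀ *ᵥ x) := by
      rw [← Matrix.mulVec_mulVec, ← Matrix.mulVec_mulVec, Matrix.dotProduct_mulVec,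
        star_trivial, star_trivial, ← Matrix.mulVec_transpose]
    rw [key]
    exact hD.dotProduct_mulVec_pos hy

/-- Key convexity inequality for `log det`:
`log det B ≤ log det C + trace (C⁻¹ B) − p` for positive definite `B`, `C`. -/
lemma aux_logdet {p : ℕ} (B C : Matrix (Fin p) (Fin p) ℝ)
    (hB : B.PosDef) (hC : C.PosDef) :
    Real.log B.det ≤ Real.log C.det + Matrix.trace (C⁻¹ * B) - p := by
  have hCi : (C⁻¹).PosDef := hC.inv
  obtain ⟨R, hRR, hRpsd⟩ : ∃ R : Matrix (Fin p) (Fin p) ℝ, R * R = C⁻¹ ∧ R.PosSemidef := by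
    open scoped MatrixOrder in
    exact ⟨CFC.sqrt C⁻¹, CFC.sqrt_mul_sqrt_self _ hCi.posSemidef.nonneg,
      (CFC.sqrt_nonneg _).posSemidef⟩
  set W := R * B * R with hW
  have hWpsd : W.PosSemidef := by
    have := hB.posSemidef.mul_mul_conjTranspose_same R
    rwa [hRpsd.1] at this
  have hdetC : 0 < C.det := hC.det_pos
  have hdetW : W.det = C.det⁻¹ * B.det := by
    rw [hW, Matrix.det_mul, Matrix.det_mul, mul_comm, ← mul_assoc, ← Matrix.det_mul, hRR,
      Matrix.det_nonsing_inv, Ring.inverse_eq_inv']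
  have hdetWpos : 0 < W.det := by
    rw [hdetW]; exact mul_pos (inv_pos.2 hdetC) hB.det_pos
  set μ := hWpsd.1.eigenvalues with hμ
  have hμnn : ∀ i, 0 ≤ μ i := hWpsd.eigenvalues_nonneg
  have hdetprod : W.det = ∏ i, μ i := by
    have := hWpsd.1.det_eq_prod_eigenvalues
    simpa using this
  have hμne : ∀ i, μ i ≠ 0 := by
    intro i hi
    rw [hdetprod] at hdetWpos
    exact absurd (Finset.prod_eq_zero (Finset.mem_univ i) hi) (ne_of_gt hdetWpos)
  have htr : Matrix.trace W = ∑ i, μ i := by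
    conv_lhs => rw [hWpsd.1.spectral_theorem, Unitary.conjStarAlgAut_apply]
    rw [Matrix.trace_mul_cycle, Matrix.mem_unitaryGroup_iff'.mp (hWpsd.1.eigenvectorUnitary).2,
      one_mul]
    simp [Matrix.trace_diagonal]
    rfl
  have htrW : Matrix.trace W = Matrix.trace (C⁻¹ * B) := by
    rw [hW, Matrix.trace_mul_comm, ← Matrix.mul_assoc, hRR]
  have hlogW : Real.log W.det ≤ Matrix.trace (C⁻¹ * B) - p := by
    rw [hdetprod, Real.log_prod (fun i _ => hμne i), ← htrW, htr]
    have hle : ∀ i ∈ Finset.univ, Real.log (μ i) ≤ μ i - 1 :=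
      fun i _ => Real.log_le_sub_one_of_pos (lt_of_le_of_ne (hμnn i) (Ne.symm (hμne i)))
    calc ∑ i, Real.log (μ i) ≤ ∑ i, (μ i - 1) := Finset.sum_le_sum hle
      _ = ∑ i, μ i - p := by rw [Finset.sum_sub_distrib]; simp
  have hBdet : B.det = W.det * C.det := by
    rw [hdetW]; field_simp
  rw [hBdet, Real.log_mul (ne_of_gt hdetWpos) (ne_of_gt hdetC)]
  linarith

/-- The closed-form ADMM Θ-update minimizes the objective
`f(Θ) = trace(SΘ) − log det Θ + (1/(2η))‖Θ − A‖_F²` over symmetric positive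
definite matrices: with `(1/η)A − S = QΛQᵀ`, `Q` orthogonal, the minimizer is
`Θ* = Q·diag(v)·Qᵀ` with `v_j = η(λ_j + √(λ_j² + 4/η))/2`. -/
theorem stmt_9 (p : ℕ) (S A : Matrix (Fin p) (Fin p) ℝ)
    (hS : S.IsSymm) (hA : A.IsSymm) (η : ℝ) (hη : 0 < η)
    (Q : Matrix (Fin p) (Fin p) ℝ) (hQ : Qᵀ * Q = 1) (hQ' : Q * Qᵀ = 1)
    (lam : Fin p → ℝ)
    (hdecomp : (1 / η) • A - S = Q * Matrix.diagonal lam * Qᵀ)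
    (v : Fin p → ℝ) (hv : v = fun j => η * (lam j + Real.sqrt (lam j ^ 2 + 4 / η)) / 2)
    (Θstar : Matrix (Fin p) (Fin p) ℝ) (hΘstar : Θstar = Q * Matrix.diagonal v * Qᵀ)
    (f : Matrix (Fin p) (Fin p) ℝ → ℝ)
    (hf : f = fun Θ => Matrix.trace (S * Θ) - Real.log Θ.det
      + (1 / (2 * η)) * ∑ i, ∑ j, (Θ i j - A i j) ^ 2) :
    ∀ Θ : Matrix (Fin p) (Fin p) ℝ, Θ.PosDef → f Θstar ≤ f Θ := by
  intro Θ hΘ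
  have hηne : η ≠ 0 := ne_of_gt hη
  -- positivity of v and the key scalar identities
  have hvpos : ∀ j, 0 < v j := by
    intro j; rw [hv]
    have h0 : lam j ^ 2 < lam j ^ 2 + 4 / η := by
      have : 0 < 4 / η := by positivity
      linarith
    have h1 : |lam j| < Real.sqrt (lam j ^ 2 + 4 / η) := by
      have := Real.sqrt_lt_sqrt (sq_nonneg (lam j)) h0
      rwa [Real.sqrt_sq_eq_abs] at this
    have h2 : 0 < lam j + Real.sqrt (lam j ^ 2 + 4 / η) := by
      have := neg_abs_le (lam j); linarith
    have := mul_pos hη h2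
    linarith
  have hquad : ∀ j, v j ^ 2 = η * (lam j * v j + 1) := by
    intro j; rw [hv]; simp only
    set t := Real.sqrt (lam j ^ 2 + 4 / η) with htdef
    have hnn : (0:ℝ) ≤ lam j ^ 2 + 4 / η := by positivity
    have ht : t ^ 2 = lam j ^ 2 + 4 / η := Real.sq_sqrt hnn
    have ht2 : t ^ 2 * η = lam j ^ 2 * η + 4 := by
      rw [ht]; field_simp
    nlinarith [ht2]
  have hrecip : ∀ j, (v j)⁻¹ = v j / η - lam j := by
    intro j
    have h := hquad j
    have hvne : v j ≠ 0 := ne_of_gt (hvpos j)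
    field_simp
    nlinarith [h]
  have hvne : ∀ j, v j ≠ 0 := fun j => ne_of_gt (hvpos j)
  -- Θstar is symmetric positive definite
  have hΘsPD : Θstar.PosDef := by
    rw [hΘstar]
    exact aux_posdef_conj ((Matrix.posDef_diagonal_iff).mpr hvpos) hQ'
  have hΘssym : Θstarᵀ = Θstar := by
    rw [hΘstar]
    simp only [Matrix.transpose_mul, Matrix.transpose_transpose, Matrix.diagonal_transpose]
    rw [Matrix.mul_assoc]
  have hΘsym : Θᵀ = Θ := by
    have h := hΘ.1
    ext i j
    have := congrFun (congrFun h i) j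
    simpa using this
  -- inverse of Θstar
  have hinv : Θstar⁻¹ = Q * Matrix.diagonal (fun j => (v j)⁻¹) * Qᵀ := by
    apply Matrix.inv_eq_right_inv
    rw [hΘstar]
    calc Q * Matrix.diagonal v * Qᵀ * (Q * Matrix.diagonal (fun j => (v j)⁻¹) * Qᵀ)
        = Q * (Matrix.diagonal v * (Qᵀ * Q) * Matrix.diagonal (fun j => (v j)⁻¹)) * Qᵀ := by
          simp only [Matrix.mul_assoc]
      _ = Q * Qᵀ := by
          rw [hQ, Matrix.mul_one, Matrix.diagonal_mul_diagonal]
          have h : (fun j => v j * (v j)⁻¹) = fun _ => (1:ℝ) := by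
            funext j; exact mul_inv_cancel₀ (hvne j)
          rw [h, Matrix.diagonal_one, Matrix.mul_one]
      _ = 1 := hQ'
  -- stationarity: the gradient of f vanishes at Θstar
  have hgrad : S + (1 / η) • Θstar - (1 / η) • A = Θstar⁻¹ := by
    have h1 : S - (1 / η) • A = -(Q * Matrix.diagonal lam * Qᵀ) := by
      rw [← hdecomp]; abel
    have h2 : (1 / η) • Θstar = Q * Matrix.diagonal (fun j => v j / η) * Qᵀ := by
      have hd : Matrix.diagonal (fun j => v j / η) = (1 / η) • Matrix.diagonal v := by
        have hfn : (fun j => v j / η) = (1 / η) • v := by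
          funext j; simp [div_eq_inv_mul]
        rw [hfn, Matrix.diagonal_smul]
      rw [hΘstar, hd, Matrix.mul_smul, Matrix.smul_mul]
    have hfun : (fun j => v j / η - lam j) = fun j => (v j)⁻¹ := by
      funext j; rw [hrecip j]
    calc S + (1 / η) • Θstar - (1 / η) • A
        = (1 / η) • Θstar + (S - (1 / η) • A) := by abel
      _ = Q * Matrix.diagonal (fun j => v j / η) * Qᵀ - Q * Matrix.diagonal lam * Qᵀ := by
          rw [h1, h2]; abel
      _ = Q * (Matrix.diagonal (fun j => v j / η) - Matrix.diagonal lam) * Qᵀ := by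
          rw [Matrix.mul_sub, Matrix.sub_mul]
      _ = Θstar⁻¹ := by
          rw [hinv, Matrix.diagonal_sub, hfun]
  -- main convexity argument
  rw [hf]
  simp only
  set Δ : Matrix (Fin p) (Fin p) ℝ := Θ - Θstar with hΔ
  have hΔsym : Δᵀ = Δ := by rw [hΔ, Matrix.transpose_sub, hΘsym, hΘssym]
  set Sq : ℝ := ∑ i, ∑ j, (Δ i j) ^ 2 with hSq
  set T : ℝ := Matrix.trace ((Θstar - A) * Δ) with hT
  have hE1 : ∑ i, ∑ j, (Θ i j - A i j) ^ 2
      = (∑ i, ∑ j, (Θstar i j - A i j) ^ 2) + Sq + 2 * T := by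
    rw [hT, aux_tr_symm _ _ hΔsym, hSq]
    rw [Finset.mul_sum, ← Finset.sum_add_distrib, ← Finset.sum_add_distrib]
    refine Finset.sum_congr rfl fun i _ => ?_
    rw [Finset.mul_sum, ← Finset.sum_add_distrib, ← Finset.sum_add_distrib]
    refine Finset.sum_congr rfl fun j _ => ?_
    have h1 : Δ i j = Θ i j - Θstar i j := rfl
    have h2 : (Θstar - A) i j = Θstar i j - A i j := rfl
    rw [h1, h2]; ring
  have hinvmul : Θstar⁻¹ * Θstar = 1 :=
    Matrix.nonsing_inv_mul _ (isUnit_iff_ne_zero.mpr (ne_of_gt hΘsPD.det_pos))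
  have hE3 : Real.log Θ.det - Real.log Θstar.det ≤ Matrix.trace (Θstar⁻¹ * Δ) := by
    have h := aux_logdet Θ Θstar hΘ hΘsPD
    have hd : Matrix.trace (Θstar⁻¹ * Δ) = Matrix.trace (Θstar⁻¹ * Θ) - p := by
      rw [hΔ, Matrix.mul_sub, Matrix.trace_sub, hinvmul, Matrix.trace_one]
      simp
    rw [hd]; linarith
  have hg0 : S + (1 / η) • (Θstar - A) - Θstar⁻¹ = 0 := by
    rw [smul_sub, ← hgrad]; abel
  have hzero : Matrix.trace (S * Δ) + (1 / η) * T - Matrix.trace (Θstar⁻¹ * Δ) = 0 := by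
    have h := congrArg (fun M => Matrix.trace (M * Δ)) hg0
    simp only [Matrix.sub_mul, Matrix.add_mul, Matrix.smul_mul, Matrix.trace_sub,
      Matrix.trace_add, Matrix.trace_smul, Matrix.zero_mul, Matrix.trace_zero,
      smul_eq_mul] at h
    rw [hT, Matrix.sub_mul, Matrix.trace_sub]
    linarith [h]
  have hSdiff : Matrix.trace (S * Θ) - Matrix.trace (S * Θstar) = Matrix.trace (S * Δ) := by
    rw [hΔ, Matrix.mul_sub, Matrix.trace_sub]
  have hSqnn : 0 ≤ Sq := by
    rw [hSq]
    exact Finset.sum_nonneg fun i _ => Finset.sum_nonneg fun j _ => sq_nonneg _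
  have hcT : 1 / (2 * η) * ((∑ i, ∑ j, (Θstar i j - A i j) ^ 2) + Sq + 2 * T)
      = 1 / (2 * η) * (∑ i, ∑ j, (Θstar i j - A i j) ^ 2) + 1 / (2 * η) * Sq + (1 / η) * T := by
    field_simp
  have hcSq : 0 ≤ 1 / (2 * η) * Sq := by positivity
  rw [hE1, hcT]
  linarith
end
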